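/- Let m ∈ ℕ with m ≥ 1, let n = 2m, let y ∈ ℕ with 0 ≤ y < 2^n and y ≠ ȳ where ȳ = 2^n − 1 − y, and write w̄ = w(y). Then the sum b_y = Σ_{x=0, x∉{y,ȳ}}^{2^n-1} i^{w(x)} (-1)^{x·y}, taken in ℂ, satisfies: b_y = (-1)^{w̄} i^{m+w̄} 2^m − i^{w̄}(1+i^{2m}) if w̄ is even, and b_y = (-1)^{w̄} i^{m+w̄} 2^m + i^{w̄}(1+i^{2m}) if w̄ is odd. -/

import Mathlib

open Finset

/-- Hamming weight of a natural number: number of 1s in its binary representation. -/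
def hw (x : ℕ) : ℕ := (Nat.digits 2 x).sum

/-- The `j`-th bit of `z`, as a natural number in `{0,1}`. -/
def nbit (z j : ℕ) : ℕ := if z.testBit j then 1 else 0

/-- Partial bitwise dot product `∑_{j=0}^{n-1} z_j x_j`. -/
def ndot (n z x : ℕ) : ℕ := ∑ j ∈ Finset.range n, nbit z j * nbit x j

lemma hw_rec (x : ℕ) : hw x = x % 2 + hw (x / 2) := by
  rcases Nat.eq_zero_or_pos x with h | h
  · subst h; simp [hw]
  · unfold hw
    rw [Nat.digits_def' (by norm_num : (1:ℕ) < 2) h]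
    simp

lemma nbit_le_one (x j : ℕ) : nbit x j ≤ 1 := by
  unfold nbit; split <;> simp

lemma nbit_zero (x : ℕ) : nbit x 0 = x % 2 := by
  unfold nbit
  rw [Nat.testBit_zero]
  rcases Nat.mod_two_eq_zero_or_one x with h | h <;> simp [h]

lemma nbit_succ (x j : ℕ) : nbit x (j + 1) = nbit (x / 2) j := by
  unfold nbit
  rw [Nat.testBit_succ]

lemma hw_sum : ∀ n, ∀ x < 2 ^ n, hw x = ∑ j ∈ Finset.range n, nbit x j := by
  intro n
  induction n with
  | zero =>
    intro x hx
    interval_cases x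
    simp [hw]
  | succ n ih =>
    intro x hx
    have h2 : (2:ℕ) ^ (n + 1) = 2 * 2 ^ n := by ring
    rw [Finset.sum_range_succ']
    simp only [nbit_succ, nbit_zero]
    rw [← ih (x / 2) (by omega)]
    rw [hw_rec x]
    omega

lemma hw_le (n x : ℕ) (hx : x < 2 ^ n) : hw x ≤ n := by
  rw [hw_sum n x hx]
  calc ∑ j ∈ Finset.range n, nbit x j ≤ ∑ j ∈ Finset.range n, 1 :=
        Finset.sum_le_sum (fun j _ => nbit_le_one x j)
    _ = n := by simp

lemma nbit_of_lt {x n : ℕ} (h : x < 2 ^ n) : nbit x n = 0 := by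
  unfold nbit
  rw [Nat.testBit_lt_two_pow h]
  simp

lemma nbit_pow_add_self {x n : ℕ} (h : x < 2 ^ n) : nbit (2 ^ n + x) n = 1 := by
  unfold nbit
  rw [Nat.testBit_eq_decide_div_mod_eq]
  have h1 : (2 ^ n + x) / 2 ^ n = 1 := by
    rw [add_comm, Nat.add_div_right _ (Nat.pow_pos (by norm_num))]
    rw [Nat.div_eq_of_lt h]
  simp [h1]

lemma nbit_pow_add {x n j : ℕ} (hj : j < n) : nbit (2 ^ n + x) j = nbit x j := by
  unfold nbit
  rw [Nat.testBit_eq_decide_div_mod_eq, Nat.testBit_eq_decide_div_mod_eq]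
  have e1 : (2:ℕ) ^ n = 2 ^ (n - j - 1) * 2 * 2 ^ j := by
    have h : n - j - 1 + 1 + j = n := by omega
    calc (2:ℕ) ^ n = 2 ^ (n - j - 1 + 1 + j) := by rw [h]
      _ = 2 ^ (n - j - 1) * 2 * 2 ^ j := by rw [pow_add, pow_add, pow_one]
  have e2 : (2 ^ n + x) / 2 ^ j = x / 2 ^ j + 2 ^ (n - j - 1) * 2 := by
    rw [add_comm, e1, Nat.add_mul_div_right _ _ (Nat.pow_pos (by norm_num))]
  rw [e2]
  have : (x / 2 ^ j + 2 ^ (n - j - 1) * 2) % 2 = (x / 2 ^ j) % 2 :=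
    Nat.add_mul_mod_self_right _ _ _
  rw [this]

lemma hw_pow_add {x n : ℕ} (h : x < 2 ^ n) : hw (2 ^ n + x) = hw x + 1 := by
  have hlt : 2 ^ n + x < 2 ^ (n + 1) := by
    have : (2:ℕ) ^ (n + 1) = 2 * 2 ^ n := by ring
    omega
  rw [hw_sum (n + 1) _ hlt, Finset.sum_range_succ, nbit_pow_add_self h,
      hw_sum n x h]
  congr 1
  exact Finset.sum_congr rfl (fun j hj => nbit_pow_add (Finset.mem_range.mp hj))

lemma ndot_succ (n z x : ℕ) : ndot (n + 1) z x = ndot n z x + nbit z n * nbit x n :=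
  Finset.sum_range_succ _ n

lemma ndot_pow_add {x n : ℕ} (y : ℕ) : ndot n (2 ^ n + x) y = ndot n x y :=
  Finset.sum_congr rfl (fun j hj => by
    rw [nbit_pow_add (Finset.mem_range.mp hj)])

lemma keysum (y : ℕ) : ∀ n,
    ∑ x ∈ Finset.range (2 ^ n), (Complex.I ^ hw x * (-1:ℂ) ^ ndot n x y)
      = ∏ j ∈ Finset.range n, (1 + Complex.I * (-1:ℂ) ^ nbit y j) := by
  intro n
  induction n with
  | zero => simp [hw, ndot]
  | succ n ih =>
    have h2 : (2:ℕ) ^ (n + 1) = 2 ^ n + 2 ^ n := by ring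
    rw [h2, Finset.sum_range_add, Finset.prod_range_succ, ← ih]
    have hA : ∀ x ∈ Finset.range (2 ^ n),
        Complex.I ^ hw x * (-1:ℂ) ^ ndot (n + 1) x y
          = Complex.I ^ hw x * (-1:ℂ) ^ ndot n x y := by
      intro x hx
      rw [ndot_succ, nbit_of_lt (Finset.mem_range.mp hx)]
      simp
    have hB : ∀ x ∈ Finset.range (2 ^ n),
        Complex.I ^ hw (2 ^ n + x) * (-1:ℂ) ^ ndot (n + 1) (2 ^ n + x) y
          = (Complex.I * (-1:ℂ) ^ nbit y n) * (Complex.I ^ hw x * (-1:ℂ) ^ ndot n x y) := by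
      intro x hx
      have hxl := Finset.mem_range.mp hx
      rw [hw_pow_add hxl, ndot_succ, ndot_pow_add, nbit_pow_add_self hxl, one_mul,
          pow_add, pow_add, pow_one]
      ring
    rw [Finset.sum_congr rfl hA, Finset.sum_congr rfl hB, ← Finset.mul_sum]
    ring

lemma prod_eval (y n : ℕ) (hy : y < 2 ^ n) :
    ∏ j ∈ Finset.range n, (1 + Complex.I * (-1:ℂ) ^ nbit y j)
      = (1 + Complex.I) ^ n * (-Complex.I) ^ hw y := by
  have h1 : ∀ j ∈ Finset.range n,
      (1 + Complex.I * (-1:ℂ) ^ nbit y j)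
        = (1 + Complex.I) * (-Complex.I) ^ nbit y j := by
    intro j _
    unfold nbit
    split
    · simp
      linear_combination Complex.I_sq
    · simp
  rw [Finset.prod_congr rfl h1, Finset.prod_mul_distrib, Finset.prod_const,
      Finset.prod_pow_eq_pow_sum, ← hw_sum n y hy, Finset.card_range]

lemma comp_testBit : ∀ n, ∀ y < 2 ^ n, ∀ j < n,
    (2 ^ n - 1 - y).testBit j = !y.testBit j := by
  intro n
  induction n with
  | zero => intro y hy j hj; omega
  | succ n ih =>
    intro y hy j hj
    have h2 : (2:ℕ) ^ (n + 1) = 2 * 2 ^ n := by ring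
    have hpos : 0 < (2:ℕ) ^ n := Nat.pow_pos (by norm_num)
    have hdiv : (2 ^ (n + 1) - 1 - y) / 2 = 2 ^ n - 1 - y / 2 := by omega
    cases j with
    | zero =>
      rw [Nat.testBit_zero, Nat.testBit_zero]
      rcases Nat.mod_two_eq_zero_or_one y with h | h
      · have hz : (2 ^ (n + 1) - 1 - y) % 2 = 1 := by omega
        simp [hz, h]
      · have hz : (2 ^ (n + 1) - 1 - y) % 2 = 0 := by omega
        simp [hz, h]
    | succ j =>
      rw [Nat.testBit_succ, Nat.testBit_succ, hdiv]
      exact ih (y / 2) (by omega) j (by omega)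

lemma alg_even (m k s : ℕ) (hms : m = k + s) :
    ((1 + Complex.I) ^ 2) ^ m * (-Complex.I) ^ (2 * k)
      - Complex.I ^ (2 * k) * (-1:ℂ) ^ (2 * k) - Complex.I ^ (2 * m - 2 * k)
    = (-1:ℂ) ^ (2 * k) * Complex.I ^ (m + 2 * k) * 2 ^ m
      - Complex.I ^ (2 * k) * (1 + Complex.I ^ (2 * m)) := by
  subst hms
  have hI2 : (1 + Complex.I) ^ 2 = 2 * Complex.I := by
    linear_combination Complex.I_sq
  have hnI : (-Complex.I) ^ (2 * k) = (-1:ℂ) ^ k := by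
    rw [pow_mul]
    norm_num [Complex.I_sq]
  have hIk : Complex.I ^ (2 * k) = (-1:ℂ) ^ k := by
    rw [pow_mul, Complex.I_sq]
  have hn1 : ((-1:ℂ)) ^ (2 * k) = 1 := by
    rw [pow_mul, neg_one_sq, one_pow]
  have hsub : 2 * (k + s) - 2 * k = 2 * s := by omega
  have hIs : Complex.I ^ (2 * (k + s) - 2 * k) = (-1:ℂ) ^ s := by
    rw [hsub, pow_mul, Complex.I_sq]
  have hI2m : Complex.I ^ (2 * (k + s)) = (-1:ℂ) ^ k * (-1:ℂ) ^ s := by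
    rw [pow_mul, Complex.I_sq, pow_add]
  have hImk : Complex.I ^ ((k + s) + 2 * k)
      = Complex.I ^ k * Complex.I ^ s * (-1:ℂ) ^ k := by
    rw [pow_add, pow_add, hIk]
  have hIm : ((1 + Complex.I) ^ 2) ^ (k + s)
      = 2 ^ (k + s) * (Complex.I ^ k * Complex.I ^ s) := by
    rw [hI2, mul_pow, pow_add]
    ring
  have ha : ((-1:ℂ)) ^ k * (-1:ℂ) ^ k = 1 := by
    rw [← pow_add, ← two_mul, pow_mul, neg_one_sq, one_pow]
  rw [hnI, hIk, hn1, hIs, hI2m, hImk, hIm]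
  linear_combination ((-1:ℂ) ^ s) * ha

lemma alg_odd (m k s : ℕ) (hms : m = k + s + 1) :
    ((1 + Complex.I) ^ 2) ^ m * (-Complex.I) ^ (2 * k + 1)
      - Complex.I ^ (2 * k + 1) * (-1:ℂ) ^ (2 * k + 1)
      - Complex.I ^ (2 * m - (2 * k + 1))
    = (-1:ℂ) ^ (2 * k + 1) * Complex.I ^ (m + (2 * k + 1)) * 2 ^ m
      + Complex.I ^ (2 * k + 1) * (1 + Complex.I ^ (2 * m)) := by
  subst hms
  have hI2 : (1 + Complex.I) ^ 2 = 2 * Complex.I := by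
    linear_combination Complex.I_sq
  have hIk : Complex.I ^ (2 * k + 1) = (-1:ℂ) ^ k * Complex.I := by
    rw [pow_succ, pow_mul, Complex.I_sq]
  have hnI : (-Complex.I) ^ (2 * k + 1) = -((-1:ℂ) ^ k * Complex.I) := by
    rw [pow_succ, pow_mul]
    norm_num [Complex.I_sq]
  have hn1 : ((-1:ℂ)) ^ (2 * k + 1) = -1 := by
    rw [pow_succ, pow_mul, neg_one_sq, one_pow, one_mul]
  have hsub : 2 * (k + s + 1) - (2 * k + 1) = 2 * s + 1 := by omega
  have hIs : Complex.I ^ (2 * (k + s + 1) - (2 * k + 1)) = (-1:ℂ) ^ s * Complex.I := by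
    rw [hsub, pow_succ, pow_mul, Complex.I_sq]
  have hI2m : Complex.I ^ (2 * (k + s + 1)) = -((-1:ℂ) ^ k * (-1:ℂ) ^ s) := by
    rw [pow_mul, Complex.I_sq, pow_add, pow_add]
    ring
  have hImk : Complex.I ^ ((k + s + 1) + (2 * k + 1))
      = Complex.I ^ k * Complex.I ^ s * (-1:ℂ) ^ k * (-1) := by
    rw [show (k + s + 1) + (2 * k + 1) = k + s + 2 * k + 2 by omega]
    rw [pow_add, pow_add, pow_add, pow_mul, Complex.I_sq]
  have hIm : ((1 + Complex.I) ^ 2) ^ (k + s + 1)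
      = 2 ^ (k + s + 1) * (Complex.I ^ k * Complex.I ^ s * Complex.I) := by
    rw [hI2, mul_pow, pow_add, pow_add]
    ring
  have ha : ((-1:ℂ)) ^ k * (-1:ℂ) ^ k = 1 := by
    rw [← pow_add, ← two_mul, pow_mul, neg_one_sq, one_pow]
  rw [hnI, hIk, hn1, hIs, hI2m, hImk, hIm]
  linear_combination ((-1:ℂ) ^ s * Complex.I) * ha
    - (2 ^ (k + s + 1) * Complex.I ^ k * Complex.I ^ s * (-1:ℂ) ^ k) * Complex.I_sq

theorem stmt_11 (m : ℕ) (hm : 1 ≤ m) (y : ℕ) (hy : y < 2 ^ (2 * m))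
    (hne : y ≠ 2 ^ (2 * m) - 1 - y) :
    (Even (hw y) →
      ∑ x ∈ (Finset.range (2 ^ (2 * m))).filter
          (fun x => x ≠ y ∧ x ≠ 2 ^ (2 * m) - 1 - y),
        Complex.I ^ hw x * (-1) ^ ndot (2 * m) x y =
      (-1) ^ hw y * Complex.I ^ (m + hw y) * 2 ^ m -
        Complex.I ^ hw y * (1 + Complex.I ^ (2 * m))) ∧
    (Odd (hw y) →
      ∑ x ∈ (Finset.range (2 ^ (2 * m))).filter
          (fun x => x ≠ y ∧ x ≠ 2 ^ (2 * m) - 1 - y),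
        Complex.I ^ hw x * (-1) ^ ndot (2 * m) x y =
      (-1) ^ hw y * Complex.I ^ (m + hw y) * 2 ^ m +
        Complex.I ^ hw y * (1 + Complex.I ^ (2 * m))) := by
  set n := 2 * m with hn
  set Y := 2 ^ n - 1 - y with hY
  have hpos : 0 < (2:ℕ) ^ n := Nat.pow_pos (by norm_num)
  have hYlt : Y < 2 ^ n := by omega
  -- complementary bits
  have hcomp : ∀ j < n, nbit Y j + nbit y j = 1 := by
    intro j hj
    unfold nbit
    rw [hY, comp_testBit n y hy j hj]
    cases y.testBit j <;> simp
  -- hw y ≤ n and hw Y = n - hw y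
  have hwy_le : hw y ≤ n := hw_le n y hy
  have hwY : hw Y = n - hw y := by
    rw [hw_sum n Y hYlt, hw_sum n y hy] at *
    have hsum : (∑ j ∈ Finset.range n, nbit Y j) + ∑ j ∈ Finset.range n, nbit y j
        = n := by
      rw [← Finset.sum_add_distrib]
      rw [Finset.sum_congr rfl (fun j hj => hcomp j (Finset.mem_range.mp hj))]
      simp
    omega
  -- ndot values at the excluded points
  have hdyy : ndot n y y = hw y := by
    rw [hw_sum n y hy]
    refine Finset.sum_congr rfl (fun j _ => ?_)
    unfold nbit
    cases y.testBit j <;> simp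
  have hdYy : ndot n Y y = 0 := by
    refine Finset.sum_eq_zero (fun j hj => ?_)
    have := hcomp j (Finset.mem_range.mp hj)
    have h1 := nbit_le_one Y j
    have h2 := nbit_le_one y j
    -- nbit Y j + nbit y j = 1 means one of them is 0
    rcases Nat.eq_zero_or_pos (nbit Y j) with h | h
    · rw [h, zero_mul]
    · have : nbit y j = 0 := by omega
      rw [this, mul_zero]
  -- decompose the filtered sum
  set f : ℕ → ℂ := fun x => Complex.I ^ hw x * (-1:ℂ) ^ ndot n x y with hf
  have hfil : (Finset.range (2 ^ n)).filter (fun x => x ≠ y ∧ x ≠ Y)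
      = Finset.range (2 ^ n) \ {y, Y} := by
    ext x
    simp only [Finset.mem_filter, Finset.mem_sdiff, Finset.mem_insert,
      Finset.mem_singleton]
    tauto
  have hsub : ({y, Y} : Finset ℕ) ⊆ Finset.range (2 ^ n) := by
    intro x hx
    simp only [Finset.mem_insert, Finset.mem_singleton] at hx
    rcases hx with rfl | rfl <;> simp [Finset.mem_range, hy, hYlt]
  have hsplit : ∑ x ∈ (Finset.range (2 ^ n)).filter (fun x => x ≠ y ∧ x ≠ Y), f x
      = (∑ x ∈ Finset.range (2 ^ n), f x) - (f y + f Y) := by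
    rw [hfil, Finset.sum_sdiff_eq_sub hsub, Finset.sum_pair hne]
  -- evaluate
  have hfull : ∑ x ∈ Finset.range (2 ^ n), f x
      = ((1 + Complex.I) ^ 2) ^ m * (-Complex.I) ^ hw y := by
    rw [hf]
    rw [keysum y n, prod_eval y n hy, hn, pow_mul]
  have hfy : f y = Complex.I ^ hw y * (-1:ℂ) ^ hw y := by
    rw [hf]; simp only [hdyy]
  have hfY : f Y = Complex.I ^ (n - hw y) := by
    rw [hf]; simp only [hdYy, hwY, pow_zero, mul_one]
  have hmain : ∑ x ∈ (Finset.range (2 ^ n)).filter (fun x => x ≠ y ∧ x ≠ Y), f x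
      = ((1 + Complex.I) ^ 2) ^ m * (-Complex.I) ^ hw y
        - Complex.I ^ hw y * (-1:ℂ) ^ hw y - Complex.I ^ (n - hw y) := by
    rw [hsplit, hfull, hfy, hfY]; ring
  constructor
  · intro hpar
    obtain ⟨k, hk⟩ := hpar
    have hk2 : hw y = 2 * k := by omega
    have hkm : k ≤ m := by omega
    obtain ⟨s, hs⟩ : ∃ s, m = k + s := ⟨m - k, by omega⟩
    rw [hmain, hk2, hn]
    exact alg_even m k s hs
  · intro hpar
    obtain ⟨k, hk⟩ := hpar
    have hkm : 2 * k + 1 ≤ 2 * m := by omega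
    obtain ⟨s, hs⟩ : ∃ s, m = k + s + 1 := ⟨m - k - 1, by omega⟩
    rw [hmain, hk, hn]
    exact alg_odd m k s hs
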